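/- Consider the WARM triangle graph. (a) For every α > 4/3 there exists exactly one equilibrium of the form (v, u, u) with v > u > 0 (so v + 2u = 1); moreover v(α) is strictly increasing on (4/3, ∞), with v(α) → 1/3 as α ↓ 4/3 and v(α) → 2/3 as α → ∞, and for 1 < α ≤ 4/3 no equilibrium of this form with v > u > 0 exists. (b) For every α with 1 < α < 4/3 there exists exactly one equilibrium of the form (v, v, u) with v > u > 0 (so 2v + u = 1); moreover v(α) is strictly decreasing on (1, 4/3), with v(α) → 1/2 as α ↓ 1 and v(α) → 1/3 as α ↑ 4/3, and for α ≥ 4/3 no equilibrium of this form with v > u > 0 exists. -/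

import Mathlib

open Finset

noncomputable section

/-- Membership in the simplex `Δ`. -/
def InSimplex {ι : Type*} [Fintype ι] (v : ι → ℝ) : Prop :=
  (∀ i, 0 ≤ v i) ∧ ∑ i, v i = 1

/-- A WARM weight: a probability distribution on the subsets of the colour set,
giving no mass to the empty set. -/
def IsWarmWeight {ι : Type*} [Fintype ι] [DecidableEq ι] (p : Finset ι → ℝ) : Prop :=
  p ∅ = 0 ∧ (∀ A, 0 ≤ p A ∧ p A ≤ 1) ∧ ∑ A : Finset ι, p A = 1

/-- The WARM vector field `F`. -/
def warmF {ι : Type*} [Fintype ι] [DecidableEq ι] (α : ℝ) (p : Finset ι → ℝ)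
    (v : ι → ℝ) (i : ι) : ℝ :=
  -v i + ∑ A ∈ Finset.univ.filter (fun A : Finset ι => i ∈ A),
      p A * v i ^ α / (∑ j ∈ A, v j ^ α)

/-- The Jacobian matrix `D(v)`. -/
def warmD {ι : Type*} [Fintype ι] [DecidableEq ι] (α : ℝ) (p : Finset ι → ℝ)
    (v : ι → ℝ) : Matrix ι ι ℝ :=
  Matrix.of fun i k =>
    if i = k then
      -1 + α * v i ^ (α - 1) *
        ∑ A ∈ Finset.univ.filter (fun A : Finset ι => i ∈ A),
          p A * ((∑ j ∈ A, v j ^ α) - v i ^ α) / (∑ j ∈ A, v j ^ α) ^ 2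
    else
      -(α * v k ^ (α - 1) * v i ^ α *
        ∑ A ∈ Finset.univ.filter (fun A : Finset ι => i ∈ A ∧ k ∈ A),
          p A / (∑ j ∈ A, v j ^ α) ^ 2)

/-- `μ ∈ ℂ` is an eigenvalue of the real matrix `M`, i.e. a root of its
characteristic polynomial. -/
def IsEigenvalue {ι : Type*} [Fintype ι] [DecidableEq ι] (M : Matrix ι ι ℝ) (μ : ℂ) : Prop :=
  (M.charpoly.map (algebraMap ℝ ℂ)).IsRoot μ

/-- Linear stability: every complex eigenvalue has negative real part. -/
def LinStable {ι : Type*} [Fintype ι] [DecidableEq ι] (M : Matrix ι ι ℝ) : Prop :=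
  ∀ μ : ℂ, IsEigenvalue M μ → μ.re < 0

/-- Linear instability: some eigenvalue has positive real part. -/
def LinUnstable {ι : Type*} [Fintype ι] [DecidableEq ι] (M : Matrix ι ι ℝ) : Prop :=
  ∃ μ : ℂ, IsEigenvalue M μ ∧ 0 < μ.re

/-- Critical: neither linearly stable nor linearly unstable. -/
def CriticalPt {ι : Type*} [Fintype ι] [DecidableEq ι] (M : Matrix ι ι ℝ) : Prop :=
  ¬ LinStable M ∧ ¬ LinUnstable M


/-- The WARM triangle graph weight: each of the three two-element subsets of `[3]` gets
mass `1/3`. -/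
def ptri : Finset (Fin 3) → ℝ := fun A => if A.card = 2 then 1 / 3 else 0

section Aux
open Real Filter Set


noncomputable def Afun (t : ℝ) : ℝ := 1 + (log 3 - log (4 - t)) / log t
noncomputable def Bfun (t : ℝ) : ℝ := (log (4*t - 1) - log 3) / log t

lemma Afun_gt {t : ℝ} (h1 : 1 < t) (h4 : t < 4) : 4/3 < Afun t := by
  have hl : 0 < log t := log_pos h1
  have ht : (0:ℝ) < t := by linarith
  have h4t : (0:ℝ) < 4 - t := by linarith
  have key : t * (4-t)^3 < 27 := by
    nlinarith [sq_nonneg (t-1), sq_nonneg (t-5), mul_nonneg (sq_nonneg (t-1)) (sq_nonneg (t-5))]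
  have h27 : log (t * (4-t)^3) < log 27 := log_lt_log (by positivity) key
  rw [log_mul ht.ne' (by positivity), log_pow] at h27
  have l27 : log 27 = 3 * log 3 := by
    rw [show (27:ℝ) = 3^3 by norm_num, log_pow]; norm_num
  have : 1/3 < (log 3 - log (4-t)) / log t := by
    rw [lt_div_iff₀ hl]
    push_cast at h27
    linarith
  rw [Afun]; linarith

lemma Bfun_lt {t : ℝ} (h1 : 1 < t) : Bfun t < 4/3 := by
  have hl : 0 < log t := log_pos h1
  have ht : (0:ℝ) < t := by linarith
  have h4t : (0:ℝ) < 4*t - 1 := by linarith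
  have key : (4*t-1)^3 < 27 * t^4 := by
    nlinarith [sq_nonneg (t-1), mul_nonneg (mul_nonneg (sq_nonneg (t-1)) ht.le) ht.le,
      mul_nonneg (sq_nonneg (t-1)) ht.le]
  have h27 : log ((4*t-1)^3) < log (27 * t^4) := log_lt_log (by positivity) key
  rw [log_pow, log_mul (by norm_num) (by positivity), log_pow,
    show (27:ℝ) = 3^3 by norm_num, log_pow] at h27
  push_cast at h27
  rw [Bfun, div_lt_iff₀ hl]
  linarith

lemma Bfun_gt {t : ℝ} (h1 : 1 < t) : 1 < Bfun t := by
  have hl : 0 < log t := log_pos h1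
  have ht : (0:ℝ) < t := by linarith
  have key : log (3*t) < log (4*t-1) := log_lt_log (by positivity) (by linarith)
  rw [log_mul (by norm_num) ht.ne'] at key
  rw [Bfun, lt_div_iff₀ hl]
  linarith

lemma charA {t α : ℝ} (h1 : 1 < t) (h4 : t < 4) :
    t^α * (4 - t) = 3 * t ↔ Afun t = α := by
  have ht : (0:ℝ) < t := by linarith
  have h4t : (0:ℝ) < 4 - t := by linarith
  have hl : 0 < log t := log_pos h1
  have hpos1 : (0:ℝ) < t^α * (4-t) := by positivity
  have hpos2 : (0:ℝ) < 3 * t := by linarith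
  rw [← log_injOn_pos.eq_iff (mem_Ioi.2 hpos1) (mem_Ioi.2 hpos2),
    log_mul (by positivity) h4t.ne', log_mul (by norm_num) ht.ne', log_rpow ht, Afun]
  constructor
  · intro h
    have hd : (log 3 - log (4 - t)) / log t = α - 1 := by
      rw [div_eq_iff hl.ne']; linarith
    rw [hd]; ring
  · intro h
    have hd : (log 3 - log (4 - t)) / log t = α - 1 := by linarith
    rw [div_eq_iff hl.ne'] at hd
    linarith

lemma charB {t α : ℝ} (h1 : 1 < t) :
    3 * t^α = 4*t - 1 ↔ Bfun t = α := by
  have ht : (0:ℝ) < t := by linarith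
  have h4t : (0:ℝ) < 4*t - 1 := by linarith
  have hl : 0 < log t := log_pos h1
  have hpos1 : (0:ℝ) < 3 * t^α := by positivity
  rw [← log_injOn_pos.eq_iff (mem_Ioi.2 hpos1) (mem_Ioi.2 h4t),
    log_mul (by norm_num) (by positivity), log_rpow ht, Bfun]
  constructor
  · intro h
    rw [eq_comm, eq_div_iff hl.ne']; linarith
  · intro h
    rw [eq_comm, eq_div_iff hl.ne'] at h; linarith

lemma mullog_hasDeriv {x : ℝ} (hx : 0 < x) :
    HasDerivAt (fun y : ℝ => y * log y) (log x + 1) x := by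
  have := (hasDerivAt_id x).mul (Real.hasDerivAt_log hx.ne')
  refine this.congr_deriv ?_
  simp [hx.ne']

lemma hA_pos {t : ℝ} (h1 : 1 < t) (h4 : t < 4) :
    0 < t * log t + (4-t) * log (4-t) - (4-t) * log 3 := by
  set h : ℝ → ℝ := fun y => y * log y + (4-y) * log (4-y) - (4-y) * log 3 with hh
  have hderiv : ∀ x ∈ Set.Ioo (0:ℝ) 4, HasDerivAt h (log x - log (4-x) + log 3) x := by
    intro x hx
    have hx0 : (0:ℝ) < x := hx.1
    have hx4 : (0:ℝ) < 4 - x := by linarith [hx.2]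
    have lin : HasDerivAt (fun y : ℝ => 4 - y) (-1) x := (hasDerivAt_id x).const_sub 4
    have d2 : HasDerivAt (fun y : ℝ => (4 - y) * log (4 - y)) ((log (4-x) + 1) * (-1)) x :=
      (mullog_hasDeriv hx4).comp x lin
    have d3 : HasDerivAt (fun y : ℝ => (4 - y) * log 3) (-1 * log 3) x := lin.mul_const (log 3)
    have := ((mullog_hasDeriv hx0).add d2).sub d3
    refine this.congr_deriv ?_
    ring
  have hmono : StrictMonoOn h (Set.Ico (1:ℝ) 4) := by
    apply strictMonoOn_of_deriv_pos (convex_Ico 1 4)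
    · intro x hx
      exact (hderiv x ⟨by linarith [hx.1], hx.2⟩).continuousAt.continuousWithinAt
    · rw [interior_Ico]
      intro x hx
      rw [(hderiv x ⟨by linarith [hx.1], hx.2⟩).deriv]
      have hx4 : (0:ℝ) < 4 - x := by linarith [hx.2]
      have key : log (4-x) < log (3*x) := log_lt_log hx4 (by linarith [hx.1])
      rw [log_mul (by norm_num) (ne_of_gt (show (0:ℝ) < x by linarith [hx.1]))] at key
      linarith
  have h10 : h 1 = 0 := by
    simp only [hh]
    norm_num
  calc (0:ℝ) = h 1 := h10.symm
    _ < h t := hmono (by constructor <;> norm_num) ⟨h1.le, h4⟩ h1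

lemma Nfun_hasDeriv {t : ℝ} (h4 : t < 4) :
    HasDerivAt (fun y : ℝ => log 3 - log (4 - y)) (1/(4-t)) t := by
  have lin : HasDerivAt (fun y : ℝ => 4 - y) (-1) t := (hasDerivAt_id t).const_sub 4
  have dl : HasDerivAt (fun y : ℝ => log (4 - y)) ((4-t)⁻¹ * (-1)) t :=
    (Real.hasDerivAt_log (by linarith)).comp t lin
  have := dl.const_sub (log 3)
  refine this.congr_deriv ?_
  ring

lemma Afun_hasDeriv {t : ℝ} (h1 : 1 < t) (h4 : t < 4) :
    HasDerivAt Afun ((1/(4-t) * log t - (log 3 - log (4-t)) * t⁻¹) / (log t)^2) t := by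
  have hl : log t ≠ 0 := (log_pos h1).ne'
  have dD : HasDerivAt log t⁻¹ t := Real.hasDerivAt_log (by linarith)
  have := ((Nfun_hasDeriv h4).div dD hl).const_add 1
  exact this

lemma Afun_strictMono : StrictMonoOn Afun (Set.Ioo (1:ℝ) 4) := by
  apply strictMonoOn_of_deriv_pos (convex_Ioo 1 4)
  · intro x hx
    exact (Afun_hasDeriv hx.1 hx.2).continuousAt.continuousWithinAt
  · rw [interior_Ioo]
    intro x hx
    rw [(Afun_hasDeriv hx.1 hx.2).deriv]
    have hx0 : (0:ℝ) < x := by linarith [hx.1]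
    have hx4 : (0:ℝ) < 4 - x := by linarith [hx.2]
    have hl : 0 < log x := log_pos hx.1
    have hh := hA_pos hx.1 hx.2
    have hnum : 0 < 1/(4-x) * log x - (log 3 - log (4-x)) * x⁻¹ := by
      have heq : 1/(4-x) * log x - (log 3 - log (4-x)) * x⁻¹
          = (x * log x + (4-x)*log (4-x) - (4-x)*log 3) / (x * (4-x)) := by
        field_simp
        ring
      rw [heq]
      exact div_pos hh (by positivity)
    exact div_pos hnum (by positivity)

lemma hB_pos {t : ℝ} (h1 : 1 < t) :
    0 < (4*t-1) * (log (4*t-1) - log 3) - 4*t*log t := by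
  set h : ℝ → ℝ := fun y => (4*y-1) * (log (4*y-1) - log 3) - 4*y*log y with hh
  have hderiv : ∀ x ∈ Set.Ioi (0:ℝ), (1/4 < x) → HasDerivAt h (4*(log (4*x-1) - log 3 - log x)) x := by
    intro x hx0 hx4
    have hx1 : (0:ℝ) < 4*x - 1 := by linarith
    have lin : HasDerivAt (fun y : ℝ => 4*y - 1) 4 x := by
      simpa using ((hasDerivAt_id x).const_mul 4).sub_const 1
    have d1 : HasDerivAt (fun y : ℝ => (4*y-1) * log (4*y-1)) ((log (4*x-1) + 1) * 4) x :=
      by have := (mullog_hasDeriv hx1).comp x lin; exact this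
    have d2 : HasDerivAt (fun y : ℝ => (4*y-1) * log 3) (4 * log 3) x := lin.mul_const (log 3)
    have d3 : HasDerivAt (fun y : ℝ => 4*y*log y) (4 * (log x + 1)) x := by
      have := (mullog_hasDeriv hx0).const_mul 4
      have heq : (fun y : ℝ => 4*y*log y) = fun y : ℝ => 4 * (y * log y) := by
        funext y; ring
      rw [heq]
      convert this using 1
    have heq : h = fun y => (4*y-1) * log (4*y-1) - (4*y-1) * log 3 - 4*y*log y := by
      funext y; simp only [hh]; ring
    rw [heq]
    have := (d1.sub d2).sub d3
    refine this.congr_deriv ?_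
    ring
  have hmono : StrictMonoOn h (Ici (1:ℝ)) := by
    apply strictMonoOn_of_deriv_pos (convex_Ici 1)
    · intro x hx
      exact (hderiv x (by simp at hx ⊢; linarith) (by simp at hx; linarith)).continuousAt.continuousWithinAt
    · rw [interior_Ici]
      intro x hx
      rw [(hderiv x (by simp at hx ⊢; linarith) (by simp at hx; linarith)).deriv]
      have hx1 : (1:ℝ) < x := hx
      have key : log (3*x) < log (4*x-1) := log_lt_log (by positivity) (by linarith)
      rw [log_mul (by norm_num) (by positivity)] at key
      linarith
  have h10 : h 1 = 0 := by
    simp only [hh]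
    norm_num
  calc (0:ℝ) = h 1 := h10.symm
    _ < h t := hmono (by norm_num) (le_of_lt h1) h1

lemma NB_hasDeriv {t : ℝ} (ht : 1/4 < t) :
    HasDerivAt (fun y : ℝ => log (4*y - 1) - log 3) (4/(4*t-1)) t := by
  have hx1 : (0:ℝ) < 4*t - 1 := by linarith
  have lin : HasDerivAt (fun y : ℝ => 4*y - 1) 4 t := by
    simpa using ((hasDerivAt_id t).const_mul 4).sub_const 1
  have dl : HasDerivAt (fun y : ℝ => log (4*y - 1)) ((4*t-1)⁻¹ * 4) t :=
    by have := (Real.hasDerivAt_log hx1.ne').comp t lin; exact this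
  have := dl.sub_const (log 3)
  refine this.congr_deriv ?_
  ring

lemma Bfun_hasDeriv {t : ℝ} (h1 : 1 < t) :
    HasDerivAt Bfun ((4/(4*t-1) * log t - (log (4*t-1) - log 3) * t⁻¹) / (log t)^2) t := by
  have hl : log t ≠ 0 := (log_pos h1).ne'
  have dD : HasDerivAt log t⁻¹ t := Real.hasDerivAt_log (by linarith)
  have := (NB_hasDeriv (by linarith)).div dD hl
  exact this

lemma Bfun_strictAnti : StrictAntiOn Bfun (Set.Ioi (1:ℝ)) := by
  apply strictAntiOn_of_deriv_neg (convex_Ioi 1)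
  · intro x hx
    exact (Bfun_hasDeriv hx).continuousAt.continuousWithinAt
  · rw [interior_Ioi]
    intro x hx
    rw [(Bfun_hasDeriv hx).deriv]
    have hx1 : (1:ℝ) < x := hx
    have hx0 : (0:ℝ) < x := by linarith
    have hx4 : (0:ℝ) < 4*x - 1 := by linarith
    have hl : 0 < log x := log_pos hx1
    have hh := hB_pos hx1
    have hnum : 4/(4*x-1) * log x - (log (4*x-1) - log 3) * x⁻¹ < 0 := by
      have heq : 4/(4*x-1) * log x - (log (4*x-1) - log 3) * x⁻¹
          = -(((4*x-1) * (log (4*x-1) - log 3) - 4*x*log x) / (x * (4*x-1))) := by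
        field_simp
        ring
      rw [heq, neg_lt, neg_zero]
      exact div_pos hh (by positivity)
    exact div_neg_of_neg_of_pos hnum (by positivity)

lemma Afun_tendsto_right : Tendsto Afun (nhdsWithin 1 (Set.Ioi (1:ℝ))) (nhds (4/3)) := by
  have H : Tendsto (fun t => (log 3 - log (4 - t)) / log t) (nhdsWithin 1 (Set.Ioi (1:ℝ)))
      (nhds (1/3)) := by
    apply HasDerivAt.lhopital_zero_right_on_Ioo (f' := fun t => 1/(4-t))
      (g' := fun t : ℝ => t⁻¹) (one_lt_two)
    · intro x hx; exact Nfun_hasDeriv (by linarith [hx.2])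
    · intro x hx; exact Real.hasDerivAt_log (by linarith [hx.1])
    · intro x hx; exact inv_ne_zero (by linarith [hx.1])
    · have hc : ContinuousAt (fun t : ℝ => log 3 - log (4 - t)) 1 := by
        apply ContinuousAt.sub continuousAt_const
        exact (Real.continuousAt_log (by norm_num)).comp (by fun_prop)
      have := tendsto_nhdsWithin_of_tendsto_nhds (s := Set.Ioi (1:ℝ)) hc.tendsto
      have e : log 3 - log (4 - (1:ℝ)) = 0 := by norm_num
      rwa [e] at this
    · have := tendsto_nhdsWithin_of_tendsto_nhds (s := Set.Ioi (1:ℝ)) (Real.continuousAt_log one_ne_zero).tendsto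
      simpa using this
    · have hc : ContinuousAt (fun x : ℝ => x / (4 - x)) 1 := by
        apply ContinuousAt.div (by fun_prop) (by fun_prop) (by norm_num)
      have base : Tendsto (fun x : ℝ => x / (4 - x)) (nhdsWithin 1 (Set.Ioi (1:ℝ))) (nhds (1/3)) := by
        have := tendsto_nhdsWithin_of_tendsto_nhds (s := Set.Ioi (1:ℝ)) hc.tendsto
        norm_num at this
        exact this
      apply base.congr'
      filter_upwards [Ioo_mem_nhdsGT_of_mem (by norm_num : (1:ℝ) ∈ Set.Ico 1 2)] with x hx
      have hx0 : (0:ℝ) < x := by linarith [hx.1]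
      have hx4 : (0:ℝ) < 4 - x := by linarith [hx.2]
      field_simp
  have := H.const_add 1
  norm_num at this
  apply this.congr
  intro x
  rw [Afun]

lemma Bfun_tendsto_right : Tendsto Bfun (nhdsWithin 1 (Set.Ioi (1:ℝ))) (nhds (4/3)) := by
  apply HasDerivAt.lhopital_zero_right_on_Ioo (f' := fun t => 4/(4*t-1))
    (g' := fun t : ℝ => t⁻¹) (one_lt_two)
  · intro x hx; exact NB_hasDeriv (by linarith [hx.1])
  · intro x hx; exact Real.hasDerivAt_log (by linarith [hx.1])
  · intro x hx; exact inv_ne_zero (by linarith [hx.1])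
  · have hc : ContinuousAt (fun t : ℝ => log (4*t - 1) - log 3) 1 := by
      apply ContinuousAt.sub _ continuousAt_const
      exact (Real.continuousAt_log (by norm_num)).comp (by fun_prop)
    have := tendsto_nhdsWithin_of_tendsto_nhds (s := Set.Ioi (1:ℝ)) hc.tendsto
    have e : log (4*(1:ℝ) - 1) - log 3 = 0 := by norm_num
    rwa [e] at this
  · have := tendsto_nhdsWithin_of_tendsto_nhds (s := Set.Ioi (1:ℝ)) (Real.continuousAt_log one_ne_zero).tendsto
    simpa using this
  · have hc : ContinuousAt (fun x : ℝ => 4*x / (4*x - 1)) 1 := by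
      apply ContinuousAt.div (by fun_prop) (by fun_prop) (by norm_num)
    have base : Tendsto (fun x : ℝ => 4*x / (4*x - 1)) (nhdsWithin 1 (Set.Ioi (1:ℝ)))
        (nhds (4/3)) := by
      have := tendsto_nhdsWithin_of_tendsto_nhds (s := Set.Ioi (1:ℝ)) hc.tendsto
      norm_num at this
      exact this
    apply base.congr'
    filter_upwards [Ioo_mem_nhdsGT_of_mem (by norm_num : (1:ℝ) ∈ Set.Ico 1 2)] with x hx
    have hx0 : (0:ℝ) < x := by linarith [hx.1]
    have hx4 : (0:ℝ) < 4*x - 1 := by linarith [hx.1]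
    field_simp

lemma Afun_tendsto_atTop : Tendsto Afun (nhdsWithin 4 (Set.Iio (4:ℝ))) atTop := by
  have h1 : Tendsto (fun t : ℝ => 4 - t) (nhdsWithin 4 (Set.Iio (4:ℝ))) (nhdsWithin 0 (Set.Ioi (0:ℝ))) := by
    apply tendsto_nhdsWithin_of_tendsto_nhds_of_eventually_within
    · have hc : ContinuousAt (fun t : ℝ => 4 - t) 4 := by fun_prop
      have h0 : Tendsto (fun t : ℝ => 4 - t) (nhds 4) (nhds 0) := by
        simpa using hc.tendsto
      exact h0.mono_left nhdsWithin_le_nhds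
    · filter_upwards [self_mem_nhdsWithin] with x hx
      exact sub_pos.2 (mem_Iio.1 hx)
  have h2 : Tendsto (fun t : ℝ => log (4 - t)) (nhdsWithin 4 (Set.Iio (4:ℝ))) atBot :=
    Real.tendsto_log_nhdsGT_zero.comp h1
  have h3 : Tendsto (fun t : ℝ => log 3 - log (4 - t)) (nhdsWithin 4 (Set.Iio (4:ℝ))) atTop := by
    have hneg : Tendsto (fun t : ℝ => -log (4 - t)) (nhdsWithin 4 (Set.Iio (4:ℝ))) atTop :=
      tendsto_neg_atTop_iff.2 h2
    have := tendsto_atTop_add_const_left _ (log 3) hneg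
    apply this.congr
    intro x
    ring
  have h4 : Tendsto (fun t : ℝ => (log t)⁻¹) (nhdsWithin 4 (Set.Iio (4:ℝ))) (nhds ((log 4)⁻¹)) := by
    have hc : ContinuousAt (fun t : ℝ => (log t)⁻¹) 4 := by
      apply ContinuousAt.inv₀ (Real.continuousAt_log (by norm_num))
      exact (log_pos (by norm_num)).ne'
    exact tendsto_nhdsWithin_of_tendsto_nhds (s := Set.Iio (4:ℝ)) hc.tendsto
  have h5 : Tendsto (fun t : ℝ => (log 3 - log (4 - t)) * (log t)⁻¹)
      (nhdsWithin 4 (Set.Iio (4:ℝ))) atTop := by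
    exact Filter.Tendsto.atTop_mul_pos (inv_pos.2 (log_pos (by norm_num))) h3 h4
  have := tendsto_atTop_add_const_left _ 1 h5
  apply this.congr
  intro x
  rw [Afun, div_eq_mul_inv]

lemma Bfun_tendsto_atTop : Tendsto Bfun atTop (nhds 1) := by
  have key : Tendsto (fun t : ℝ => 1 + log ((4*t-1)/(3*t)) / log t) atTop (nhds 1) := by
    have hnum : Tendsto (fun t : ℝ => log ((4*t-1)/(3*t))) atTop (nhds (log (4/3))) := by
      have harg : Tendsto (fun t : ℝ => (4*t-1)/(3*t)) atTop (nhds (4/3)) := by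
        have : (fun t : ℝ => (4*t-1)/(3*t)) =ᶠ[atTop] fun t => 4/3 - (1/3) * t⁻¹ := by
          filter_upwards [eventually_gt_atTop (0:ℝ)] with t ht
          field_simp
        rw [tendsto_congr' this]
        have : Tendsto (fun t : ℝ => (1/3) * t⁻¹) atTop (nhds 0) := by
          simpa using tendsto_inv_atTop_zero.const_mul (1/3 : ℝ)
        have := this.const_sub (4/3 : ℝ)
        simpa using this
      exact ((Real.continuousAt_log (by norm_num)).tendsto).comp harg
    have := Tendsto.div_atTop hnum tendsto_log_atTop
    have h2 := this.const_add 1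
    simpa using h2
  apply key.congr'
  filter_upwards [eventually_gt_atTop (1:ℝ)] with t ht
  have ht0 : (0:ℝ) < t := by linarith
  have h41 : (0:ℝ) < 4*t-1 := by linarith
  have hl : log t ≠ 0 := (log_pos ht).ne'
  rw [log_div h41.ne' (by positivity), log_mul (by norm_num) ht0.ne', Bfun]
  field_simp
  ring

lemma existsT {α : ℝ} (hα : 4/3 < α) : ∃ t, t ∈ Set.Ioo (1:ℝ) 4 ∧ Afun t = α := by
  obtain ⟨t0, ht0, ht0mem⟩ : ∃ t0, Afun t0 < α ∧ t0 ∈ Set.Ioo (1:ℝ) 4 := by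
    have h1 : ∀ᶠ t in nhdsWithin 1 (Set.Ioi (1:ℝ)), Afun t < α :=
      Afun_tendsto_right.eventually_lt_const hα
    have h2 : ∀ᶠ t in nhdsWithin 1 (Set.Ioi (1:ℝ)), t ∈ Set.Ioo (1:ℝ) 4 :=
      Ioo_mem_nhdsGT_of_mem (by norm_num : (1:ℝ) ∈ Set.Ico (1:ℝ) 4)
    exact (h1.and h2).exists
  obtain ⟨t1, ht1, ht1mem⟩ : ∃ t1, α < Afun t1 ∧ t1 ∈ Set.Ioo t0 4 := by
    have h1 : ∀ᶠ t in nhdsWithin 4 (Set.Iio (4:ℝ)), α < Afun t :=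
      Afun_tendsto_atTop.eventually_gt_atTop α
    have h2 : ∀ᶠ t in nhdsWithin 4 (Set.Iio (4:ℝ)), t ∈ Set.Ioo t0 4 :=
      Ioo_mem_nhdsLT_of_mem (by exact ⟨ht0mem.2, le_refl _⟩ : (4:ℝ) ∈ Set.Ioc t0 4)
    exact (h1.and h2).exists
  have hsub : Set.Icc t0 t1 ⊆ Set.Ioo (1:ℝ) 4 := fun x hx =>
    ⟨lt_of_lt_of_le ht0mem.1 hx.1, lt_of_le_of_lt hx.2 ht1mem.2⟩
  have hc : ContinuousOn Afun (Set.Icc t0 t1) := fun x hx =>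
    (Afun_hasDeriv (hsub hx).1 (hsub hx).2).continuousAt.continuousWithinAt
  obtain ⟨t, htmem, ht⟩ := intermediate_value_Icc (le_of_lt ht1mem.1) hc ⟨ht0.le, ht1.le⟩
  exact ⟨t, hsub htmem, ht⟩

lemma existsS {α : ℝ} (hα1 : 1 < α) (hα2 : α < 4/3) : ∃ t, 1 < t ∧ Bfun t = α := by
  obtain ⟨t0, ht0, ht0mem⟩ : ∃ t0, Bfun t0 < α ∧ 1 < t0 := by
    have h1 : ∀ᶠ t in atTop, Bfun t < α := Bfun_tendsto_atTop.eventually_lt_const hα1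
    have h2 : ∀ᶠ t : ℝ in atTop, 1 < t := eventually_gt_atTop 1
    exact (h1.and h2).exists
  obtain ⟨t1, ht1, ht1mem⟩ : ∃ t1, α < Bfun t1 ∧ t1 ∈ Set.Ioo (1:ℝ) t0 := by
    have h1 : ∀ᶠ t in nhdsWithin 1 (Set.Ioi (1:ℝ)), α < Bfun t :=
      Bfun_tendsto_right.eventually_const_lt hα2
    have h2 : ∀ᶠ t in nhdsWithin 1 (Set.Ioi (1:ℝ)), t ∈ Set.Ioo (1:ℝ) t0 :=
      Ioo_mem_nhdsGT_of_mem (⟨le_refl _, ht0mem⟩ : (1:ℝ) ∈ Set.Ico (1:ℝ) t0)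
    exact (h1.and h2).exists
  have hsub : Set.Icc t1 t0 ⊆ Set.Ioi (1:ℝ) := fun x hx => lt_of_lt_of_le ht1mem.1 hx.1
  have hc : ContinuousOn Bfun (Set.Icc t1 t0) := fun x hx =>
    (Bfun_hasDeriv (hsub hx)).continuousAt.continuousWithinAt
  obtain ⟨t, htmem, ht⟩ := intermediate_value_Icc' (le_of_lt ht1mem.2) hc ⟨ht0.le, ht1.le⟩
  exact ⟨t, hsub htmem, ht⟩

noncomputable def TT (α : ℝ) : ℝ := if h : 4/3 < α then (existsT h).choose else 2

lemma TT_spec {α : ℝ} (h : 4/3 < α) : TT α ∈ Set.Ioo (1:ℝ) 4 ∧ Afun (TT α) = α := by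
  rw [TT, dif_pos h]; exact (existsT h).choose_spec

noncomputable def SS (α : ℝ) : ℝ :=
  if h : 1 < α ∧ α < 4/3 then (existsS h.1 h.2).choose else 2

lemma SS_spec {α : ℝ} (h1 : 1 < α) (h2 : α < 4/3) : 1 < SS α ∧ Bfun (SS α) = α := by
  rw [SS, dif_pos ⟨h1, h2⟩]; exact (existsS h1 h2).choose_spec

lemma SS_gt_one (α : ℝ) : 1 < SS α := by
  rw [SS]
  split
  · next h => exact (existsS h.1 h.2).choose_spec.1
  · norm_num

section WF
open Finset

lemma warmF0 (α a b c : ℝ) : warmF α ptri ![a,b,c] 0 =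
    -a + (1/3) * a^α/(a^α+b^α) + (1/3)*a^α/(a^α+c^α) := by
  rw [warmF]
  rw [show (Finset.univ.filter (fun A : Finset (Fin 3) => (0:Fin 3) ∈ A)) =
    {{0},{0,1},{0,2},{0,1,2}} from by decide]
  simp +decide [ptri, Finset.sum_insert]
  ring

lemma warmF1 (α a b c : ℝ) : warmF α ptri ![a,b,c] 1 =
    -b + (1/3) * b^α/(a^α+b^α) + (1/3)*b^α/(b^α+c^α) := by
  rw [warmF]
  rw [show (Finset.univ.filter (fun A : Finset (Fin 3) => (1:Fin 3) ∈ A)) =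
    {{1},{0,1},{1,2},{0,1,2}} from by decide]
  simp +decide [ptri, Finset.sum_insert]
  ring

lemma warmF2 (α a b c : ℝ) : warmF α ptri ![a,b,c] 2 =
    -c + (1/3) * c^α/(a^α+c^α) + (1/3)*c^α/(b^α+c^α) := by
  rw [warmF]
  rw [show (Finset.univ.filter (fun A : Finset (Fin 3) => (2:Fin 3) ∈ A)) =
    {{2},{0,2},{1,2},{0,1,2}} from by decide]
  simp +decide [ptri, Finset.sum_insert]
  ring

lemma equivA (α a b : ℝ) (hb : 0 < b) (ha : 0 < a) (hsum : a + 2*b = 1) :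
    (∀ i, warmF α ptri ![a,b,b] i = 0) ↔ 3*a*(a^α + b^α) = 2*a^α := by
  have hx : (0:ℝ) < a^α := Real.rpow_pos_of_pos ha _
  have hy : (0:ℝ) < b^α := Real.rpow_pos_of_pos hb _
  have hs : a^α + b^α ≠ 0 := by positivity
  have hs2 : b^α + b^α ≠ 0 := by positivity
  constructor
  · intro h
    have h0 := h 0
    rw [warmF0] at h0
    field_simp at h0
    linarith
  · intro key i
    fin_cases i
    · show warmF α ptri ![a,b,b] 0 = 0
      rw [warmF0]; field_simp; linarith
    · show warmF α ptri ![a,b,b] 1 = 0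
      rw [warmF1]; field_simp
      linear_combination key - 3*(a^α+b^α)*hsum
    · show warmF α ptri ![a,b,b] 2 = 0
      rw [warmF2]; field_simp
      linear_combination key - 3*(a^α+b^α)*hsum

lemma equivB (α a b : ℝ) (hb : 0 < b) (ha : 0 < a) (hsum : 2*a + b = 1) :
    (∀ i, warmF α ptri ![a,a,b] i = 0) ↔ 3*b*(a^α + b^α) = 2*b^α := by
  have hx : (0:ℝ) < a^α := Real.rpow_pos_of_pos ha _
  have hy : (0:ℝ) < b^α := Real.rpow_pos_of_pos hb _
  have hs : a^α + b^α ≠ 0 := by positivity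
  have hs2 : a^α + a^α ≠ 0 := by positivity
  constructor
  · intro h
    have h0 := h 2
    rw [warmF2] at h0
    field_simp at h0
    linarith
  · intro key i
    fin_cases i
    · show warmF α ptri ![a,a,b] 0 = 0
      rw [warmF0]; field_simp
      linear_combination key - 3*(a^α+b^α)*hsum
    · show warmF α ptri ![a,a,b] 1 = 0
      rw [warmF1]; field_simp
      linear_combination key - 3*(a^α+b^α)*hsum
    · show warmF α ptri ![a,a,b] 2 = 0
      rw [warmF2]; field_simp; linarith

end WF

lemma equilA_iff {α a b : ℝ} (hb : 0 < b) (hba : b < a) (hsum : a + 2*b = 1) :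
    (∀ i, warmF α ptri ![a,b,b] i = 0) ↔ (a/b)^α * (4 - a/b) = 3*(a/b) := by
  have ha : 0 < a := hb.trans hba
  set t := a/b with htdef
  have ht0 : 0 < t := div_pos ha hb
  have hA : a = t * b := by rw [htdef, div_mul_cancel₀ a hb.ne']
  rw [equivA α a b hb ha hsum, hA, Real.mul_rpow ht0.le hb.le]
  have hb2 : b * (t + 2) = 1 := by rw [hA] at hsum; linear_combination hsum
  have hy : (0:ℝ) < b^α := Real.rpow_pos_of_pos hb _
  constructor
  · intro h
    have h' : 3*t*b*(t^α+1) = 2*t^α := by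
      apply mul_right_cancel₀ hy.ne'
      linear_combination h
    linear_combination (-(t+2)) * h' + (3*t*(t^α+1)) * hb2
  · intro h
    have h' : 3*t*b*(t^α+1) = 2*t^α := by
      linear_combination b * (-(1:ℝ)) * h + (2*t^α) * hb2
    linear_combination (b^α) * h'

lemma equilB_iff {α a b : ℝ} (hb : 0 < b) (hba : b < a) (hsum : 2*a + b = 1) :
    (∀ i, warmF α ptri ![a,a,b] i = 0) ↔ 3 * (a/b)^α = 4*(a/b) - 1 := by
  have ha : 0 < a := hb.trans hba
  set t := a/b with htdef
  have ht0 : 0 < t := div_pos ha hb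
  have hA : a = t * b := by rw [htdef, div_mul_cancel₀ a hb.ne']
  rw [equivB α a b hb ha hsum, hA, Real.mul_rpow ht0.le hb.le]
  have hb2 : b * (2*t + 1) = 1 := by rw [hA] at hsum; linear_combination hsum
  have hy : (0:ℝ) < b^α := Real.rpow_pos_of_pos hb _
  constructor
  · intro h
    have h' : 3*b*(t^α+1) = 2 := by
      apply mul_right_cancel₀ hy.ne'
      linear_combination h
    linear_combination (2*t+1) * h' + (-(3:ℝ)*(t^α+1)) * hb2
  · intro h
    have h' : 3*b*(t^α+1) = 2 := by
      linear_combination b * h + 2 * hb2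
    linear_combination (b^α) * h'

noncomputable def ffun (α : ℝ) : ℝ := TT α / (TT α + 2)
noncomputable def ggun (α : ℝ) : ℝ := SS α / (2 * SS α + 1)

lemma parta_item {α : ℝ} (hα : 4/3 < α) :
    (1 - ffun α)/2 < ffun α ∧ 0 < (1 - ffun α)/2 ∧
    (∀ i, warmF α ptri ![ffun α, (1 - ffun α)/2, (1 - ffun α)/2] i = 0) ∧
    (∀ a b : ℝ, b < a → 0 < b → a + 2*b = 1 →
      (∀ i, warmF α ptri ![a, b, b] i = 0) → a = ffun α) := by
  obtain ⟨⟨ht1, ht4⟩, hAf⟩ := TT_spec hα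
  set t := TT α with htd
  have ht2 : (0:ℝ) < t + 2 := by linarith
  have hfv : ffun α = t / (t+2) := rfl
  have hbval : (1 - ffun α)/2 = (t+2)⁻¹ := by
    rw [hfv]; field_simp; ring
  have hb : (0:ℝ) < (1 - ffun α)/2 := by rw [hbval]; positivity
  have hba : (1 - ffun α)/2 < ffun α := by
    rw [hbval, hfv, inv_eq_one_div, div_lt_div_iff₀ ht2 ht2]
    nlinarith
  have hsum : ffun α + 2*((1 - ffun α)/2) = 1 := by ring
  refine ⟨hba, hb, ?_, ?_⟩
  · rw [equilA_iff hb hba hsum]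
    have hab : ffun α / ((1 - ffun α)/2) = t := by
      rw [hbval, hfv]; field_simp
    rw [hab, charA ht1 ht4]
    exact hAf
  · intro a b hba' hb' hsum' heq
    rw [equilA_iff hb' hba' hsum'] at heq
    set s := a/b with hsd
    have hs1 : 1 < s := (one_lt_div hb').2 hba'
    have hs0 : (0:ℝ) < s := by linarith
    have hs4 : s < 4 := by
      by_contra hcon
      push_neg at hcon
      nlinarith [Real.rpow_pos_of_pos hs0 α]
    have hAs : Afun s = α := (charA hs1 hs4).1 heq
    have hseq : s = t := Afun_strictMono.injOn ⟨hs1, hs4⟩ ⟨ht1, ht4⟩ (by rw [hAs, hAf])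
    have hav : a = s * b := by rw [hsd, div_mul_cancel₀ a hb'.ne']
    have hb2 : b * (s+2) = 1 := by rw [hav] at hsum'; linear_combination hsum'
    rw [hfv, ← hseq, hav]
    rw [eq_div_iff (by linarith)]
    linear_combination s * hb2

lemma parta_nonexist {α a b : ℝ} (hα2 : α ≤ 4/3) (hba : b < a) (hb : 0 < b)
    (hsum : a + 2*b = 1) : ¬ (∀ i, warmF α ptri ![a,b,b] i = 0) := by
  intro heq
  rw [equilA_iff hb hba hsum] at heq
  set s := a/b with hsd
  have hs1 : 1 < s := (one_lt_div hb).2 hba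
  have hs0 : (0:ℝ) < s := by linarith
  have hs4 : s < 4 := by
    by_contra hcon
    push_neg at hcon
    nlinarith [Real.rpow_pos_of_pos hs0 α]
  have hgt := Afun_gt hs1 hs4
  rw [(charA hs1 hs4).1 heq] at hgt
  linarith

lemma partb_item {α : ℝ} (hα1 : 1 < α) (hα2 : α < 4/3) :
    1 - 2*ggun α < ggun α ∧ 0 < 1 - 2*ggun α ∧
    (∀ i, warmF α ptri ![ggun α, ggun α, 1 - 2*ggun α] i = 0) ∧
    (∀ a b : ℝ, b < a → 0 < b → 2*a + b = 1 →
      (∀ i, warmF α ptri ![a, a, b] i = 0) → a = ggun α) := by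
  obtain ⟨ht1, hBf⟩ := SS_spec hα1 hα2
  set t := SS α with htd
  have ht2 : (0:ℝ) < 2*t + 1 := by linarith
  have hfv : ggun α = t / (2*t+1) := rfl
  have hbval : 1 - 2*ggun α = (2*t+1)⁻¹ := by
    rw [hfv]; field_simp; ring
  have hb : (0:ℝ) < 1 - 2*ggun α := by rw [hbval]; positivity
  have hba : 1 - 2*ggun α < ggun α := by
    rw [hbval, hfv, inv_eq_one_div, div_lt_div_iff₀ ht2 ht2]
    nlinarith
  have hsum : 2*(ggun α) + (1 - 2*ggun α) = 1 := by ring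
  refine ⟨hba, hb, ?_, ?_⟩
  · rw [equilB_iff hb hba hsum]
    have hab : ggun α / (1 - 2*ggun α) = t := by
      rw [hbval, hfv]; field_simp
    rw [hab, charB ht1]
    exact hBf
  · intro a b hba' hb' hsum' heq
    rw [equilB_iff hb' hba' hsum'] at heq
    set s := a/b with hsd
    have hs1 : 1 < s := (one_lt_div hb').2 hba'
    have hAs : Bfun s = α := (charB hs1).1 heq
    have hseq : s = t := Bfun_strictAnti.injOn hs1 ht1 (by rw [hAs, hBf])
    have hav : a = s * b := by rw [hsd, div_mul_cancel₀ a hb'.ne']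
    have hb2 : b * (2*s+1) = 1 := by rw [hav] at hsum'; linear_combination hsum'
    rw [hfv, ← hseq, hav]
    rw [eq_div_iff (by linarith)]
    linear_combination s * hb2

lemma partb_nonexist {α a b : ℝ} (hα2 : 4/3 ≤ α) (hba : b < a) (hb : 0 < b)
    (hsum : 2*a + b = 1) : ¬ (∀ i, warmF α ptri ![a,a,b] i = 0) := by
  intro heq
  rw [equilB_iff hb hba hsum] at heq
  set s := a/b with hsd
  have hs1 : 1 < s := (one_lt_div hb).2 hba
  have hlt := Bfun_lt hs1
  rw [(charB hs1).1 heq] at hlt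
  linarith

lemma ffun_mono : StrictMonoOn ffun (Set.Ioi (4/3:ℝ)) := by
  intro α hα β hβ hab
  have h1 := TT_spec hα
  have h2 := TT_spec hβ
  have hT : TT α < TT β := by
    apply (Afun_strictMono.lt_iff_lt h1.1 h2.1).1
    rw [h1.2, h2.2]; exact hab
  have ha2 : (0:ℝ) < TT α + 2 := by linarith [h1.1.1]
  have hb2 : (0:ℝ) < TT β + 2 := by linarith [h2.1.1]
  show TT α / (TT α + 2) < TT β / (TT β + 2)
  rw [div_lt_div_iff₀ ha2 hb2]
  nlinarith

lemma ggun_anti : StrictAntiOn ggun (Set.Ioo (1:ℝ) (4/3:ℝ)) := by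
  intro α hα β hβ hab
  have h1 := SS_spec hα.1 hα.2
  have h2 := SS_spec hβ.1 hβ.2
  have hT : SS β < SS α := by
    apply (Bfun_strictAnti.lt_iff_gt h1.1 h2.1).1
    rw [h1.2, h2.2]; exact hab
  have ha2 : (0:ℝ) < 2 * SS α + 1 := by linarith [h1.1]
  have hb2 : (0:ℝ) < 2 * SS β + 1 := by linarith [h2.1]
  show SS β / (2 * SS β + 1) < SS α / (2 * SS α + 1)
  rw [div_lt_div_iff₀ hb2 ha2]
  nlinarith

lemma TT_tendsto_right : Tendsto TT (nhdsWithin (4/3) (Set.Ioi (4/3:ℝ))) (nhds 1) := by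
  rw [tendsto_order]
  constructor
  · intro c hc
    filter_upwards [self_mem_nhdsWithin] with α hα
    exact lt_trans hc (TT_spec hα).1.1
  · intro c hc
    rcases le_or_gt 4 c with h4 | h4
    · filter_upwards [self_mem_nhdsWithin] with α hα
      exact lt_of_lt_of_le (TT_spec hα).1.2 h4
    · have hAc : 4/3 < Afun c := Afun_gt hc h4
      filter_upwards [Ioo_mem_nhdsGT_of_mem
        (⟨le_refl _, hAc⟩ : (4/3:ℝ) ∈ Set.Ico (4/3:ℝ) (Afun c))] with α hα
      have h1 := TT_spec hα.1
      apply (Afun_strictMono.lt_iff_lt h1.1 ⟨hc, h4⟩).1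
      rw [h1.2]
      exact hα.2

lemma ffun_tendsto_right : Tendsto ffun (nhdsWithin (4/3) (Set.Ioi (4/3:ℝ))) (nhds (1/3)) := by
  have h := TT_tendsto_right
  have h2 : Tendsto (fun α => TT α / (TT α + 2)) (nhdsWithin (4/3) (Set.Ioi (4/3:ℝ)))
      (nhds (1/(1+2))) := h.div (h.add tendsto_const_nhds) (by norm_num)
  norm_num at h2
  exact h2

lemma TT_tendsto_top : Tendsto TT atTop (nhds 4) := by
  rw [tendsto_order]
  constructor
  · intro c hc
    rcases le_or_gt c 1 with h1 | h1
    · filter_upwards [eventually_gt_atTop (4/3:ℝ)] with α hα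
      exact lt_of_le_of_lt h1 (TT_spec hα).1.1
    · have hAc := Afun_gt h1 hc
      filter_upwards [eventually_gt_atTop (Afun c)] with α hα
      have hα43 : 4/3 < α := hAc.trans hα
      have h1' := TT_spec hα43
      apply (Afun_strictMono.lt_iff_lt ⟨h1, hc⟩ h1'.1).1
      rw [h1'.2]
      exact hα
  · intro c hc
    filter_upwards [eventually_gt_atTop (4/3:ℝ)] with α hα
    exact lt_trans (TT_spec hα).1.2 hc

lemma ffun_tendsto_top : Tendsto ffun atTop (nhds (2/3)) := by
  have h := TT_tendsto_top
  have h2 : Tendsto (fun α => TT α / (TT α + 2)) atTop (nhds (4/(4+2))) :=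
    h.div (h.add tendsto_const_nhds) (by norm_num)
  norm_num at h2
  exact h2

lemma SS_tendsto_one : Tendsto SS (nhdsWithin 1 (Set.Ioi (1:ℝ))) atTop := by
  rw [tendsto_atTop]
  intro M
  set c := max M 2 with hcd
  have hc1 : (1:ℝ) < c := lt_of_lt_of_le one_lt_two (le_max_right _ _)
  have hBc1 : 1 < Bfun c := Bfun_gt hc1
  have hBc2 : Bfun c < 4/3 := Bfun_lt hc1
  filter_upwards [Ioo_mem_nhdsGT_of_mem
    (⟨le_refl _, hBc1⟩ : (1:ℝ) ∈ Set.Ico (1:ℝ) (Bfun c))] with α hα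
  obtain ⟨hS1, hSB⟩ := SS_spec hα.1 (hα.2.trans hBc2)
  have hlt : c < SS α := by
    apply (Bfun_strictAnti.lt_iff_gt hS1 hc1).1
    rw [hSB]
    exact hα.2
  exact le_of_lt (lt_of_le_of_lt (le_max_left _ _) hlt)

lemma ggun_tendsto_one : Tendsto ggun (nhdsWithin 1 (Set.Ioi (1:ℝ))) (nhds (1/2)) := by
  have hinv : Tendsto (fun α => (SS α)⁻¹) (nhdsWithin 1 (Set.Ioi (1:ℝ))) (nhds 0) :=
    SS_tendsto_one.inv_tendsto_atTop
  have h2 : Tendsto (fun α => 2 + (SS α)⁻¹) (nhdsWithin 1 (Set.Ioi (1:ℝ))) (nhds 2) := by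
    have := hinv.const_add 2
    simpa using this
  have h3 : Tendsto (fun α => (2 + (SS α)⁻¹)⁻¹) (nhdsWithin 1 (Set.Ioi (1:ℝ)))
      (nhds (1/2)) := by
    have := h2.inv₀ (by norm_num)
    norm_num at this ⊢
    exact this
  apply h3.congr
  intro α
  have hS := SS_gt_one α
  have hSpos : (0:ℝ) < SS α := by linarith
  have hS0 : SS α ≠ 0 := by linarith
  have hipos : (0:ℝ) < 2 + (SS α)⁻¹ := by
    have := inv_pos.2 hSpos; linarith
  show (2 + (SS α)⁻¹)⁻¹ = SS α / (2 * SS α + 1)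
  rw [inv_eq_one_div, div_eq_div_iff hipos.ne' (show (2 * SS α + 1) ≠ 0 by nlinarith)]
  field_simp

lemma SS_tendsto_43 : Tendsto SS (nhdsWithin (4/3) (Set.Iio (4/3:ℝ))) (nhds 1) := by
  rw [tendsto_order]
  constructor
  · intro c hc
    filter_upwards [self_mem_nhdsWithin] with α _
    exact lt_trans hc (SS_gt_one α)
  · intro c hc
    set c' := min c 2 with hc'd
    have hc'1 : (1:ℝ) < c' := lt_min hc one_lt_two
    have hBc1 : 1 < Bfun c' := Bfun_gt hc'1
    have hBc2 : Bfun c' < 4/3 := Bfun_lt hc'1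
    filter_upwards [Ioo_mem_nhdsLT_of_mem
      (⟨hBc2, le_refl _⟩ : (4/3:ℝ) ∈ Set.Ioc (Bfun c') (4/3:ℝ))] with α hα
    obtain ⟨hS1, hSB⟩ := SS_spec (lt_trans hBc1 hα.1) hα.2
    have hlt : SS α < c' := by
      apply (Bfun_strictAnti.lt_iff_gt hc'1 hS1).1
      rw [hSB]
      exact hα.1
    exact lt_of_lt_of_le hlt (min_le_left _ _)

lemma ggun_tendsto_43 : Tendsto ggun (nhdsWithin (4/3) (Set.Iio (4/3:ℝ))) (nhds (1/3)) := by
  have h := SS_tendsto_43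
  have h2 : Tendsto (fun α => SS α / (2 * SS α + 1)) (nhdsWithin (4/3) (Set.Iio (4/3:ℝ)))
      (nhds (1/(2*1+1))) := h.div ((h.const_mul 2).add tendsto_const_nhds) (by norm_num)
  norm_num at h2
  exact h2

end Aux

/-- **Triangle equilibria of the forms `(v,u,u)` and `(v,v,u)`.**
(a) For every `α > 4/3` there is exactly one equilibrium `(v,u,u)` with `v > u > 0`
(`v + 2u = 1`); `v(α)` is strictly increasing on `(4/3,∞)`, `v(α) → 1/3` as `α ↓ 4/3`,
`v(α) → 2/3` as `α → ∞`, and no such equilibrium exists for `1 < α ≤ 4/3`.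
(b) For every `1 < α < 4/3` there is exactly one equilibrium `(v,v,u)` with
`v > u > 0` (`2v + u = 1`); `v(α)` is strictly decreasing on `(1,4/3)`, `v(α) → 1/2`
as `α ↓ 1`, `v(α) → 1/3` as `α ↑ 4/3`, and no such equilibrium exists for
`α ≥ 4/3`. -/
theorem triangle_vuu_and_vvu_equilibria :
    (∃ f : ℝ → ℝ,
      StrictMonoOn f (Set.Ioi (4 / 3 : ℝ)) ∧
      Filter.Tendsto f (nhdsWithin (4 / 3) (Set.Ioi (4 / 3 : ℝ))) (nhds (1 / 3)) ∧
      Filter.Tendsto f Filter.atTop (nhds (2 / 3)) ∧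
      (∀ α : ℝ, 4 / 3 < α →
        (1 - f α) / 2 < f α ∧ 0 < (1 - f α) / 2 ∧
        (∀ i, warmF α ptri ![f α, (1 - f α) / 2, (1 - f α) / 2] i = 0) ∧
        (∀ a b : ℝ, b < a → 0 < b → a + 2 * b = 1 →
          (∀ i, warmF α ptri ![a, b, b] i = 0) → a = f α)) ∧
      (∀ α : ℝ, 1 < α → α ≤ 4 / 3 → ∀ a b : ℝ, b < a → 0 < b → a + 2 * b = 1 →
        ¬ (∀ i, warmF α ptri ![a, b, b] i = 0))) ∧
    (∃ g : ℝ → ℝ,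
      StrictAntiOn g (Set.Ioo (1 : ℝ) (4 / 3)) ∧
      Filter.Tendsto g (nhdsWithin 1 (Set.Ioi (1 : ℝ))) (nhds (1 / 2)) ∧
      Filter.Tendsto g (nhdsWithin (4 / 3) (Set.Iio (4 / 3 : ℝ))) (nhds (1 / 3)) ∧
      (∀ α : ℝ, 1 < α → α < 4 / 3 →
        1 - 2 * g α < g α ∧ 0 < 1 - 2 * g α ∧
        (∀ i, warmF α ptri ![g α, g α, 1 - 2 * g α] i = 0) ∧
        (∀ a b : ℝ, b < a → 0 < b → 2 * a + b = 1 →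
          (∀ i, warmF α ptri ![a, a, b] i = 0) → a = g α)) ∧
      (∀ α : ℝ, 4 / 3 ≤ α → ∀ a b : ℝ, b < a → 0 < b → 2 * a + b = 1 →
        ¬ (∀ i, warmF α ptri ![a, a, b] i = 0))) := by
  constructor
  · exact ⟨ffun, ffun_mono, ffun_tendsto_right, ffun_tendsto_top,
      fun α hα => parta_item hα,
      fun α _ hα2 a b hba hb hsum => parta_nonexist hα2 hba hb hsum⟩
  · exact ⟨ggun, ggun_anti, ggun_tendsto_one, ggun_tendsto_43,
      fun α hα1 hα2 => partb_item hα1 hα2,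
      fun α hα a b hba hb hsum => partb_nonexist hα hba hb hsum⟩

end
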